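/- Let G be a claw-free graph admitting a non-reduced W-join. Then there exists a graph H with V(H) = V(G), E(H) ⊊ E(G) in the sense |E(H)| < |E(G)|, such that H is claw-free and χ(H) = χ(G). -/

import Mathlib

open SimpleGraph

/-- A graph is claw-free if it has no induced `K_{1,3}`. -/
def ClawFree {V : Type*} (G : SimpleGraph V) : Prop :=
  ¬ ∃ u a b c : V, a ≠ b ∧ a ≠ c ∧ b ≠ c ∧
    G.Adj u a ∧ G.Adj u b ∧ G.Adj u c ∧ ¬ G.Adj a b ∧ ¬ G.Adj a c ∧ ¬ G.Adj b c

/-- `(A, B)` is a homogeneous pair of cliques. -/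
def IsHomogeneousPair {V : Type*} (G : SimpleGraph V) (A B : Set V) : Prop :=
  Disjoint A B ∧ G.IsClique A ∧ G.IsClique B ∧
    ∀ v ∉ A ∪ B,
      ((∀ a ∈ A, G.Adj v a) ∨ (∀ a ∈ A, ¬ G.Adj v a)) ∧
      ((∀ b ∈ B, G.Adj v b) ∨ (∀ b ∈ B, ¬ G.Adj v b))

/-- A W-join is a homogeneous pair in which `A` is neither complete nor anticomplete
to `B`. -/
def IsWJoin {V : Type*} (G : SimpleGraph V) (A B : Set V) : Prop :=
  IsHomogeneousPair G A B ∧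
    (∃ a ∈ A, ∃ b ∈ B, G.Adj a b) ∧ (∃ a ∈ A, ∃ b ∈ B, ¬ G.Adj a b)

/-- A W-join `(A, B)` is reduced if `A` and `B` split as `A₁ ∪ A₂`, `B₁ ∪ B₂` with `A₁`
complete to `B₁`, `A₂` anticomplete to `B`, and `B₂` anticomplete to `A`. -/
def IsReducedWJoin {V : Type*} (G : SimpleGraph V) (A B : Set V) : Prop :=
  ∃ A₁ A₂ B₁ B₂ : Set V, A = A₁ ∪ A₂ ∧ Disjoint A₁ A₂ ∧ B = B₁ ∪ B₂ ∧ Disjoint B₁ B₂ ∧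
    (∀ a ∈ A₁, ∀ b ∈ B₁, G.Adj a b) ∧
    (∀ a ∈ A₂, ∀ b ∈ B, ¬ G.Adj a b) ∧
    (∀ a ∈ A, ∀ b ∈ B₂, ¬ G.Adj a b)

namespace Stmt18Aux

def mod {V : Type*} (G : SimpleGraph V) (A B A' B' : Set V) : SimpleGraph V where
  Adj x y := G.Adj x y ∧ ¬(x ∈ A ∧ y ∈ B ∧ (x ∈ A' ∨ y ∈ B')) ∧
    ¬(y ∈ A ∧ x ∈ B ∧ (y ∈ A' ∨ x ∈ B'))
  symm := ⟨fun x y h => ⟨h.1.symm, h.2.2, h.2.1⟩⟩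
  loopless := ⟨fun x h => G.loopless.irrefl x h.1⟩

variable {V : Type*} {G : SimpleGraph V} {A B A' B' : Set V}

lemma mod_adj {x y : V} : (mod G A B A' B').Adj x y ↔
    G.Adj x y ∧ ¬(x ∈ A ∧ y ∈ B ∧ (x ∈ A' ∨ y ∈ B')) ∧
    ¬(y ∈ A ∧ x ∈ B ∧ (y ∈ A' ∨ x ∈ B')) := Iff.rfl

lemma mod_le : mod G A B A' B' ≤ G := fun _ _ h => h.1

lemma mod_helper (hcf : ClawFree G) (hd : Disjoint A B) (hA : G.IsClique A) (hB : G.IsClique B)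
    (hout : ∀ v ∉ A ∪ B,
      ((∀ a ∈ A, G.Adj v a) ∨ (∀ a ∈ A, ¬ G.Adj v a)) ∧
      ((∀ b ∈ B, G.Adj v b) ∨ (∀ b ∈ B, ¬ G.Adj v b)))
    (hC2a : ∀ a ∈ A', ∃ b ∈ B, ¬G.Adj a b) (hC2b : ∀ b ∈ B', ∃ a ∈ A, ¬G.Adj a b)
    {u p q r : V} (hpr : p ≠ r) (hqr : q ≠ r)
    (hup : (mod G A B A' B').Adj u p) (huq : (mod G A B A' B').Adj u q)
    (hur : (mod G A B A' B').Adj u r)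
    (h1 : ¬(mod G A B A' B').Adj p q) (h2 : ¬(mod G A B A' B').Adj p r)
    (h3 : ¬(mod G A B A' B').Adj q r)
    (hpA : p ∈ A) (hqB : q ∈ B) (hGpq : G.Adj p q) : False := by
  have hdAB : ∀ {x : V}, x ∈ A → x ∉ B := fun hx hy => Set.disjoint_left.mp hd hx hy
  have hdBA : ∀ {x : V}, x ∈ B → x ∉ A := fun hx hy => Set.disjoint_left.mp hd hy hx
  have hpB : p ∉ B := hdAB hpA
  have hqA : q ∉ A := hdBA hqB
  -- r is outside A ∪ B
  have hrA : r ∉ A := by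
    intro hrA
    exact h2 ⟨hA hpA hrA hpr, fun h => hdAB hrA h.2.1, fun h => hpB h.2.1⟩
  have hrB : r ∉ B := by
    intro hrB
    exact h3 ⟨hB hqB hrB hqr, fun h => hqA h.1, fun h => hrA h.1⟩
  -- G-nonadjacencies to r
  have hGpr : ¬G.Adj p r := fun h => h2 ⟨h, fun hh => hrB hh.2.1, fun hh => hrA hh.1⟩
  have hGqr : ¬G.Adj q r := fun h => h3 ⟨h, fun hh => hqA hh.1, fun hh => hrA hh.1⟩
  -- r is anticomplete to A and to B
  obtain ⟨hr1, hr2⟩ := hout r (by simp [hrA, hrB])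
  have hrantiA : ∀ a ∈ A, ¬G.Adj r a := by
    rcases hr1 with h | h
    · exact fun a ha _ => (fun hh => hGpr hh.symm) (h p hpA)
    · exact h
  have hrantiB : ∀ b ∈ B, ¬G.Adj r b := by
    rcases hr2 with h | h
    · exact fun b hb _ => (fun hh => hGqr hh.symm) (h q hqB)
    · exact h
  -- locate u
  by_cases huA : u ∈ A
  · exact hrantiA u huA hur.1.symm
  by_cases huB : u ∈ B
  · exact hrantiB u huB hur.1.symm
  obtain ⟨hu1, hu2⟩ := hout u (by simp [huA, huB])
  have hucompA : ∀ a ∈ A, G.Adj u a := by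
    rcases hu1 with h | h
    · exact h
    · exact absurd hup.1 (h p hpA)
  have hucompB : ∀ b ∈ B, G.Adj u b := by
    rcases hu2 with h | h
    · exact h
    · exact absurd huq.1 (h q hqB)
  -- the pair (p,q) was deleted: one endpoint in the cover
  have hdel : p ∈ A' ∨ q ∈ B' := by
    by_contra hcon
    push_neg at hcon
    exact h1 ⟨hGpq, fun hh => hh.2.2.elim hcon.1 hcon.2, fun hh => hqA hh.1⟩
  rcases hdel with hp' | hq'
  · obtain ⟨b', hb'B, hnb'⟩ := hC2a p hp'
    refine hcf ⟨u, p, b', r, fun h => hdAB hpA (h ▸ hb'B), hpr, fun h => hrB (h ▸ hb'B), ?_⟩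
    exact ⟨hup.1, hucompB b' hb'B, hur.1, hnb', hGpr, fun h => hrantiB b' hb'B h.symm⟩
  · obtain ⟨a', ha'A, hna'⟩ := hC2b q hq'
    refine hcf ⟨u, a', q, r, fun h => hdAB ha'A (h ▸ hqB), fun h => hrA (h ▸ ha'A), hqr, ?_⟩
    exact ⟨hucompA a' ha'A, huq.1, hur.1, hna', fun h => hrantiA a' ha'A h.symm, hGqr⟩

lemma mod_clawFree (hcf : ClawFree G) (hd : Disjoint A B) (hA : G.IsClique A) (hB : G.IsClique B)
    (hout : ∀ v ∉ A ∪ B,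
      ((∀ a ∈ A, G.Adj v a) ∨ (∀ a ∈ A, ¬ G.Adj v a)) ∧
      ((∀ b ∈ B, G.Adj v b) ∨ (∀ b ∈ B, ¬ G.Adj v b)))
    (hC2a : ∀ a ∈ A', ∃ b ∈ B, ¬G.Adj a b) (hC2b : ∀ b ∈ B', ∃ a ∈ A, ¬G.Adj a b) :
    ClawFree (mod G A B A' B') := by
  rintro ⟨u, p, q, r, hpq, hpr, hqr, hup, huq, hur, h1, h2, h3⟩
  have key : ∀ x y : V, ¬(mod G A B A' B').Adj x y → G.Adj x y →
      (x ∈ A ∧ y ∈ B) ∨ (y ∈ A ∧ x ∈ B) := by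
    intro x y h h'
    by_contra hc
    push_neg at hc
    refine h ⟨h', fun hh => hc.1 hh.1 hh.2.1, fun hh => hc.2 hh.1 hh.2.1⟩
  have symmAdj : ∀ {x y : V}, ¬(mod G A B A' B').Adj x y → ¬(mod G A B A' B').Adj y x :=
    fun h hh => h hh.symm
  by_cases hGpq : G.Adj p q
  · rcases key p q h1 hGpq with ⟨h4, h5⟩ | ⟨h4, h5⟩
    · exact mod_helper hcf hd hA hB hout hC2a hC2b hpr hqr hup huq hur h1 h2 h3 h4 h5 hGpq
    · exact mod_helper hcf hd hA hB hout hC2a hC2b hqr hpr huq hup hur (symmAdj h1) h3 h2 h4 h5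
        hGpq.symm
  by_cases hGpr : G.Adj p r
  · rcases key p r h2 hGpr with ⟨h4, h5⟩ | ⟨h4, h5⟩
    · exact mod_helper hcf hd hA hB hout hC2a hC2b hpq hqr.symm hup hur huq h2 h1 (symmAdj h3)
        h4 h5 hGpr
    · exact mod_helper hcf hd hA hB hout hC2a hC2b hqr.symm hpq hur hup huq (symmAdj h2)
        (symmAdj h3) h1 h4 h5 hGpr.symm
  by_cases hGqr : G.Adj q r
  · rcases key q r h3 hGqr with ⟨h4, h5⟩ | ⟨h4, h5⟩
    · exact mod_helper hcf hd hA hB hout hC2a hC2b hpq.symm hpr.symm huq hur hup h3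
        (symmAdj h1) (symmAdj h2) h4 h5 hGqr
    · exact mod_helper hcf hd hA hB hout hC2a hC2b hpr.symm hpq.symm hur huq hup (symmAdj h3)
        (symmAdj h2) (symmAdj h1) h4 h5 hGqr.symm
  exact hcf ⟨u, p, q, r, hpq, hpr, hqr, hup.1, huq.1, hur.1, hGpq, hGpr, hGqr⟩

lemma mod_colorable [Fintype V]
    (hd : Disjoint A B) (hA : G.IsClique A) (hB : G.IsClique B)
    (hout : ∀ v ∉ A ∪ B,
      ((∀ a ∈ A, G.Adj v a) ∨ (∀ a ∈ A, ¬ G.Adj v a)) ∧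
      ((∀ b ∈ B, G.Adj v b) ∨ (∀ b ∈ B, ¬ G.Adj v b)))
    (hC1 : ∀ a ∈ A, ∀ b ∈ B, ¬G.Adj a b → a ∈ A' ∨ b ∈ B')
    (f : A' → V) (hfinj : Function.Injective f) (hfB : ∀ a, f a ∈ B) (hfB' : ∀ a, f a ∉ B')
    (hfadj : ∀ a : A', ¬G.Adj a.1 (f a))
    (g : B' → V) (hginj : Function.Injective g) (hgA : ∀ b, g b ∈ A) (hgA' : ∀ b, g b ∉ A')
    (hgadj : ∀ b : B', ¬G.Adj (g b) b.1)
    {n : ℕ} (hc : (mod G A B A' B').Colorable n) : G.Colorable n := by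
  classical
  obtain ⟨c⟩ := hc
  have hdAB : ∀ {z : V}, z ∈ A → z ∉ B := fun hz hy => Set.disjoint_left.mp hd hz hy
  have hdBA : ∀ {z : V}, z ∈ B → z ∉ A := fun hz hy => Set.disjoint_left.mp hd hy hz
  have hadjA : ∀ {z w : V}, z ∈ A → w ∈ A → z ≠ w → (mod G A B A' B').Adj z w :=
    fun hz hw hzw => ⟨hA hz hw hzw, fun h => hdAB hw h.2.1, fun h => hdAB hz h.2.1⟩
  have hadjB : ∀ {z w : V}, z ∈ B → w ∈ B → z ≠ w → (mod G A B A' B').Adj z w :=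
    fun hz hw hzw => ⟨hB hz hw hzw, fun h => hdBA hz h.1, fun h => hdBA hw h.1⟩
  have hcrossy : ∀ {z w : V}, z ∈ A → w ∈ B → z ∉ A' → w ∉ B' →
      (mod G A B A' B').Adj z w := by
    intro z w hz hw hz' hw'
    have hG : G.Adj z w := by
      by_contra hn
      rcases hC1 z hz w hw hn with h | h
      exacts [hz' h, hw' h]
    exact ⟨hG, fun hh => hh.2.2.elim hz' hw', fun hh => hdBA hw hh.1⟩
  have hcinjA : ∀ {z w : V}, z ∈ A → w ∈ A → c z = c w → z = w := by
    intro z w hz hw h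
    by_contra hne
    exact c.valid (hadjA hz hw hne) h
  have hcinjB : ∀ {z w : V}, z ∈ B → w ∈ B → c z = c w → z = w := by
    intro z w hz hw h
    by_contra hne
    exact c.valid (hadjB hz hw hne) h
  set AS := (Set.toFinite A).toFinset with hASdef
  set BS := (Set.toFinite B).toFinset with hBSdef
  have hASmem : ∀ {v : V}, v ∈ AS ↔ v ∈ A := fun {v} => Set.Finite.mem_toFinset _
  have hBSmem : ∀ {v : V}, v ∈ BS ↔ v ∈ B := fun {v} => Set.Finite.mem_toFinset _
  set CA := AS.image (fun v => c v) with hCAdef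
  set CB := BS.image (fun v => c v) with hCBdef
  set P := CA ∩ CB with hPdef
  have exA : ∀ k : {k // k ∈ P}, ∃ a, a ∈ A ∧ c a = ↑k := by
    intro k
    obtain ⟨a, ha, hak⟩ := Finset.mem_image.mp (Finset.mem_inter.mp k.2).1
    exact ⟨a, hASmem.mp ha, hak⟩
  have exB : ∀ k : {k // k ∈ P}, ∃ b, b ∈ B ∧ c b = ↑k := by
    intro k
    obtain ⟨b, hb, hbk⟩ := Finset.mem_image.mp (Finset.mem_inter.mp k.2).2
    exact ⟨b, hBSmem.mp hb, hbk⟩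
  choose ak hakA hakc using exA
  choose bk hbkB hbkc using exB
  have hakinj : Function.Injective ak := by
    intro k l h
    apply Subtype.ext
    rw [← hakc k, ← hakc l, h]
  have hbkinj : Function.Injective bk := by
    intro k l h
    apply Subtype.ext
    rw [← hbkc k, ← hbkc l, h]
  have hdelk : ∀ k, ak k ∈ A' ∨ bk k ∈ B' := by
    intro k
    by_contra hcon
    push_neg at hcon
    exact c.valid (hcrossy (hakA k) (hbkB k) hcon.1 hcon.2) (by rw [hakc k, hbkc k])
  set x : {k // k ∈ P} → V :=
    fun k => if h : ak k ∈ A' then ak k else g ⟨bk k, (hdelk k).resolve_left h⟩ with hxdef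
  set y : {k // k ∈ P} → V :=
    fun k => if h : ak k ∈ A' then f ⟨ak k, h⟩ else bk k with hydef
  have hxA : ∀ k, x k ∈ A := by
    intro k
    simp only [hxdef]
    split_ifs with h
    · exact hakA k
    · exact hgA _
  have hyB : ∀ k, y k ∈ B := by
    intro k
    simp only [hydef]
    split_ifs with h
    · exact hfB _
    · exact hbkB k
  have hxyadj : ∀ k, ¬G.Adj (x k) (y k) := by
    intro k
    simp only [hxdef, hydef]
    split_ifs with h
    · exact hfadj ⟨ak k, h⟩
    · exact hgadj _
  have hxinj : Function.Injective x := by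
    intro k l h
    simp only [hxdef] at h
    by_cases h1 : ak k ∈ A' <;> by_cases h2 : ak l ∈ A'
    · rw [dif_pos h1, dif_pos h2] at h; exact hakinj h
    · rw [dif_pos h1, dif_neg h2] at h
      rw [h] at h1; exact absurd h1 (hgA' _)
    · rw [dif_neg h1, dif_pos h2] at h
      rw [← h] at h2; exact absurd h2 (hgA' _)
    · rw [dif_neg h1, dif_neg h2] at h
      exact hbkinj (congrArg Subtype.val (hginj h))
  have hyinj : Function.Injective y := by
    intro k l h
    simp only [hydef] at h
    by_cases h1 : ak k ∈ A' <;> by_cases h2 : ak l ∈ A'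
    · rw [dif_pos h1, dif_pos h2] at h
      exact hakinj (congrArg Subtype.val (hfinj h))
    · rw [dif_pos h1, dif_neg h2] at h
      have hbl : bk l ∈ B' := (hdelk l).resolve_left h2
      rw [← h] at hbl; exact absurd hbl (hfB' _)
    · rw [dif_neg h1, dif_pos h2] at h
      have hbl : bk k ∈ B' := (hdelk k).resolve_left h1
      rw [h] at hbl; exact absurd hbl (hfB' _)
    · rw [dif_neg h1, dif_neg h2] at h; exact hbkinj h
  set XF := (Finset.univ : Finset {k // k ∈ P}).image x with hXFdef
  set YF := (Finset.univ : Finset {k // k ∈ P}).image y with hYFdef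
  have hXFsub : XF ⊆ AS := by
    intro v hv
    obtain ⟨k, _, rfl⟩ := Finset.mem_image.mp hv
    exact hASmem.mpr (hxA k)
  have hYFsub : YF ⊆ BS := by
    intro v hv
    obtain ⟨k, _, rfl⟩ := Finset.mem_image.mp hv
    exact hBSmem.mpr (hyB k)
  have hCAcard : CA.card = AS.card :=
    Finset.card_image_of_injOn (fun u hu v hv h => hcinjA (hASmem.mp hu) (hASmem.mp hv) h)
  have hCBcard : CB.card = BS.card :=
    Finset.card_image_of_injOn (fun u hu v hv h => hcinjB (hBSmem.mp hu) (hBSmem.mp hv) h)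
  have hXFcard : XF.card = P.card := by
    rw [hXFdef, Finset.card_image_of_injective _ hxinj, Finset.card_univ, Fintype.card_coe]
  have hYFcard : YF.card = P.card := by
    rw [hYFdef, Finset.card_image_of_injective _ hyinj, Finset.card_univ, Fintype.card_coe]
  have hPCA : P ⊆ CA := Finset.inter_subset_left
  have hPCB : P ⊆ CB := Finset.inter_subset_right
  have hcards : (AS \ XF).card = (CA \ P).card := by
    rw [Finset.card_sdiff_of_subset hXFsub, Finset.card_sdiff_of_subset hPCA, hCAcard, hXFcard]
  have hcards' : (BS \ YF).card = (CB \ P).card := by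
    rw [Finset.card_sdiff_of_subset hYFsub, Finset.card_sdiff_of_subset hPCB, hCBcard, hYFcard]
  set eA : ↥(AS \ XF) ≃ ↥(CA \ P) := Finset.equivOfCardEq hcards with heAdef
  set eB : ↥(BS \ YF) ≃ ↥(CB \ P) := Finset.equivOfCardEq hcards' with heBdef
  set cA : V → Fin n := fun v =>
    if h : ∃ k, x k = v then ↑(Classical.choose h)
    else if hv : v ∈ AS \ XF then ↑(eA ⟨v, hv⟩) else c v with hcAdef
  set cB : V → Fin n := fun v =>
    if h : ∃ k, y k = v then ↑(Classical.choose h)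
    else if hv : v ∈ BS \ YF then ↑(eB ⟨v, hv⟩) else c v with hcBdef
  have hcA_cases : ∀ v ∈ A, (∃ k, v = x k ∧ cA v = ↑k) ∨
      (∃ hv : v ∈ AS \ XF, cA v = ↑(eA ⟨v, hv⟩)) := by
    intro v hv
    simp only [hcAdef]
    split_ifs with h1 h2
    · exact Or.inl ⟨Classical.choose h1, (Classical.choose_spec h1).symm, rfl⟩
    · exact Or.inr ⟨h2, rfl⟩
    · exfalso
      have hvXF : v ∈ XF := by
        by_contra hx
        exact h2 (Finset.mem_sdiff.mpr ⟨hASmem.mpr hv, hx⟩)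
      obtain ⟨k, _, hk⟩ := Finset.mem_image.mp hvXF
      exact h1 ⟨k, hk⟩
  have hcB_cases : ∀ v ∈ B, (∃ k, v = y k ∧ cB v = ↑k) ∨
      (∃ hv : v ∈ BS \ YF, cB v = ↑(eB ⟨v, hv⟩)) := by
    intro v hv
    simp only [hcBdef]
    split_ifs with h1 h2
    · exact Or.inl ⟨Classical.choose h1, (Classical.choose_spec h1).symm, rfl⟩
    · exact Or.inr ⟨h2, rfl⟩
    · exfalso
      have hvYF : v ∈ YF := by
        by_contra hx
        exact h2 (Finset.mem_sdiff.mpr ⟨hBSmem.mpr hv, hx⟩)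
      obtain ⟨k, _, hk⟩ := Finset.mem_image.mp hvYF
      exact h1 ⟨k, hk⟩
  have hcA_mem : ∀ {v}, v ∈ A → cA v ∈ CA := by
    intro v hv
    rcases hcA_cases v hv with ⟨k, _, hk⟩ | ⟨hv', hk⟩
    · rw [hk]; exact hPCA k.2
    · rw [hk]; exact (Finset.mem_sdiff.mp (eA ⟨v, hv'⟩).2).1
  have hcB_mem : ∀ {v}, v ∈ B → cB v ∈ CB := by
    intro v hv
    rcases hcB_cases v hv with ⟨k, _, hk⟩ | ⟨hv', hk⟩
    · rw [hk]; exact hPCB k.2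
    · rw [hk]; exact (Finset.mem_sdiff.mp (eB ⟨v, hv'⟩).2).1
  have hcA_inj : ∀ {z w}, z ∈ A → w ∈ A → cA z = cA w → z = w := by
    intro z w hz hw h
    rcases hcA_cases z hz with ⟨k, hxk, hk⟩ | ⟨hz', hk⟩ <;>
      rcases hcA_cases w hw with ⟨l, hxl, hl⟩ | ⟨hw', hl⟩
    · have : k = l := Subtype.ext (by rw [← hk, ← hl, h])
      rw [hxk, hxl, this]
    · exfalso
      have h2 : cA w ∈ CA \ P := by rw [hl]; exact (eA ⟨w, hw'⟩).2
      rw [← h, hk] at h2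
      exact (Finset.mem_sdiff.mp h2).2 k.2
    · exfalso
      have h2 : cA z ∈ CA \ P := by rw [hk]; exact (eA ⟨z, hz'⟩).2
      rw [h, hl] at h2
      exact (Finset.mem_sdiff.mp h2).2 l.2
    · have h3 : eA ⟨z, hz'⟩ = eA ⟨w, hw'⟩ :=
        Subtype.ext (show (↑(eA ⟨z, hz'⟩) : Fin n) = ↑(eA ⟨w, hw'⟩) by rw [← hk, ← hl]; exact h)
      exact congrArg Subtype.val (eA.injective h3)
  have hcB_inj : ∀ {z w}, z ∈ B → w ∈ B → cB z = cB w → z = w := by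
    intro z w hz hw h
    rcases hcB_cases z hz with ⟨k, hxk, hk⟩ | ⟨hz', hk⟩ <;>
      rcases hcB_cases w hw with ⟨l, hxl, hl⟩ | ⟨hw', hl⟩
    · have : k = l := Subtype.ext (by rw [← hk, ← hl, h])
      rw [hxk, hxl, this]
    · exfalso
      have h2 : cB w ∈ CB \ P := by rw [hl]; exact (eB ⟨w, hw'⟩).2
      rw [← h, hk] at h2
      exact (Finset.mem_sdiff.mp h2).2 k.2
    · exfalso
      have h2 : cB z ∈ CB \ P := by rw [hk]; exact (eB ⟨z, hz'⟩).2
      rw [h, hl] at h2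
      exact (Finset.mem_sdiff.mp h2).2 l.2
    · have h3 : eB ⟨z, hz'⟩ = eB ⟨w, hw'⟩ :=
        Subtype.ext (show (↑(eB ⟨z, hz'⟩) : Fin n) = ↑(eB ⟨w, hw'⟩) by rw [← hk, ← hl]; exact h)
      exact congrArg Subtype.val (eB.injective h3)
  have keyAB : ∀ u v, u ∈ A → v ∈ B → G.Adj u v → cA u = cB v → False := by
    intro u v hu hv hadj heq
    have h1 : cA u ∈ P := by
      refine Finset.mem_inter.mpr ⟨hcA_mem hu, ?_⟩
      rw [heq]; exact hcB_mem hv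
    rcases hcA_cases u hu with ⟨k, hxk, hk⟩ | ⟨hu', hk⟩
    · rcases hcB_cases v hv with ⟨l, hyl, hl⟩ | ⟨hv', hl⟩
      · have hkl : k = l := Subtype.ext (by rw [← hk, ← hl, heq])
        rw [hxk, hyl, ← hkl] at hadj
        exact hxyadj k hadj
      · have h2 : cB v ∈ CB \ P := by rw [hl]; exact (eB ⟨v, hv'⟩).2
        rw [← heq] at h2
        exact (Finset.mem_sdiff.mp h2).2 h1
    · have h2 : cA u ∈ CA \ P := by rw [hk]; exact (eA ⟨u, hu'⟩).2
      exact (Finset.mem_sdiff.mp h2).2 h1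
  have keyAout : ∀ u v, u ∈ A → v ∉ A → v ∉ B → G.Adj u v → cA u = c v → False := by
    intro u v hu hv1 hv2 hadj heq
    obtain ⟨a, haAS, hac⟩ := Finset.mem_image.mp (hcA_mem hu)
    have haA : a ∈ A := hASmem.mp haAS
    have hvcomp : G.Adj v a := by
      rcases (hout v (by simp [hv1, hv2])).1 with h | h
      · exact h a haA
      · exact absurd hadj.symm (h u hu)
    have hHadj : (mod G A B A' B').Adj v a :=
      ⟨hvcomp, fun hh => hv1 hh.1, fun hh => hv2 hh.2.1⟩
    exact c.valid hHadj ((hac.trans heq).symm)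
  have keyBout : ∀ u v, u ∈ B → v ∉ A → v ∉ B → G.Adj u v → cB u = c v → False := by
    intro u v hu hv1 hv2 hadj heq
    obtain ⟨b, hbBS, hbc⟩ := Finset.mem_image.mp (hcB_mem hu)
    have hbB : b ∈ B := hBSmem.mp hbBS
    have hvcomp : G.Adj v b := by
      rcases (hout v (by simp [hv1, hv2])).2 with h | h
      · exact h b hbB
      · exact absurd hadj.symm (h u hu)
    have hHadj : (mod G A B A' B').Adj v b :=
      ⟨hvcomp, fun hh => hv1 hh.1, fun hh => hdBA hbB hh.1⟩
    exact c.valid hHadj ((hbc.trans heq).symm)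
  refine ⟨Coloring.mk (fun v => if v ∈ A then cA v else if v ∈ B then cB v else c v) ?_⟩
  intro u v hadj heq
  by_cases huA : u ∈ A <;> by_cases hvA : v ∈ A
  · rw [if_pos huA, if_pos hvA] at heq
    exact G.ne_of_adj hadj (hcA_inj huA hvA heq)
  · by_cases hvB : v ∈ B
    · rw [if_pos huA, if_neg hvA, if_pos hvB] at heq
      exact keyAB u v huA hvB hadj heq
    · rw [if_pos huA, if_neg hvA, if_neg hvB] at heq
      exact keyAout u v huA hvA hvB hadj heq
  · by_cases huB : u ∈ B
    · rw [if_neg huA, if_pos hvA, if_pos huB] at heq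
      exact keyAB v u hvA huB hadj.symm heq.symm
    · rw [if_neg huA, if_neg huB, if_pos hvA] at heq
      exact keyAout v u hvA huA huB hadj.symm heq.symm
  · by_cases huB : u ∈ B <;> by_cases hvB : v ∈ B
    · rw [if_neg huA, if_neg hvA, if_pos huB, if_pos hvB] at heq
      exact G.ne_of_adj hadj (hcB_inj huB hvB heq)
    · rw [if_neg huA, if_neg hvA, if_pos huB, if_neg hvB] at heq
      exact keyBout u v huB hvA hvB hadj heq
    · rw [if_neg huA, if_neg hvA, if_neg huB, if_pos hvB] at heq
      exact keyBout v u hvB huA huB hadj.symm heq.symm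
    · rw [if_neg huA, if_neg hvA, if_neg huB, if_neg hvB] at heq
      have hHadj : (mod G A B A' B').Adj u v :=
        ⟨hadj, fun hh => huA hh.1, fun hh => hvA hh.1⟩
      exact c.valid hHadj heq


end Stmt18Aux

/-- If a claw-free graph `G` admits a non-reduced W-join, then there is a claw-free graph
`H` on the same vertex set with strictly fewer edges and the same chromatic number. -/
theorem stmt18 {V : Type*} [Fintype V] (G : SimpleGraph V) (hcf : ClawFree G)
    (A B : Set V) (hWJ : IsWJoin G A B) (hnr : ¬ IsReducedWJoin G A B) :
    ∃ H : SimpleGraph V, ClawFree H ∧ H.edgeSet.ncard < G.edgeSet.ncard ∧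
      H.chromaticNumber = G.chromaticNumber := by
  classical
  obtain ⟨⟨hd, hA, hB, hout⟩, _hsome, ⟨a1, ha1, b1, hb1, hnadj1⟩⟩ := hWJ
  set K : Set ℕ := {k | ∃ s t : Finset V, (↑s ⊆ A ∧ ↑t ⊆ B ∧
    ∀ a ∈ A, ∀ b ∈ B, ¬G.Adj a b → a ∈ s ∨ b ∈ t) ∧ s.card + t.card = k} with hK
  have hKne : K.Nonempty := by
    refine ⟨((Set.toFinite A).toFinset).card + (∅ : Finset V).card,
      (Set.toFinite A).toFinset, ∅, ⟨?_, ?_, ?_⟩, rfl⟩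
    · intro a ha
      exact (Set.Finite.mem_toFinset _).mp ha
    · simp
    · intro a ha b hb hn
      exact Or.inl ((Set.Finite.mem_toFinset _).mpr ha)
  obtain ⟨AF, BF, ⟨hAFA, hBFB, hcov⟩, hAFBF⟩ := Nat.sInf_mem hKne
  have hmin : ∀ s t : Finset V, ↑s ⊆ A → ↑t ⊆ B →
      (∀ a ∈ A, ∀ b ∈ B, ¬G.Adj a b → a ∈ s ∨ b ∈ t) → sInf K ≤ s.card + t.card :=
    fun s t h1 h2 h3 => Nat.sInf_le ⟨s, t, ⟨h1, h2, h3⟩, rfl⟩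
  -- every cover vertex has a non-neighbour on the other side
  have hC2a : ∀ a ∈ AF, ∃ b ∈ B, ¬G.Adj a b := by
    intro a haF
    by_contra hno
    push_neg at hno
    have hcov' : ∀ a' ∈ A, ∀ b ∈ B, ¬G.Adj a' b → a' ∈ AF.erase a ∨ b ∈ BF := by
      intro a' ha' b hb hn
      rcases hcov a' ha' b hb hn with h | h
      · left
        refine Finset.mem_erase.mpr ⟨?_, h⟩
        rintro rfl
        exact hn (hno b hb)
      · exact Or.inr h
    have hle := hmin (AF.erase a) BF
      ((Finset.coe_subset.mpr (Finset.erase_subset a AF)).trans hAFA) hBFB hcov'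
    have hlt : (AF.erase a).card < AF.card := Finset.card_erase_lt_of_mem haF
    omega
  have hC2b : ∀ b ∈ BF, ∃ a ∈ A, ¬G.Adj a b := by
    intro b hbF
    by_contra hno
    push_neg at hno
    have hcov' : ∀ a ∈ A, ∀ b' ∈ B, ¬G.Adj a b' → a ∈ AF ∨ b' ∈ BF.erase b := by
      intro a ha b' hb' hn
      rcases hcov a ha b' hb' hn with h | h
      · exact Or.inl h
      · right
        refine Finset.mem_erase.mpr ⟨?_, h⟩
        rintro rfl
        exact hn (hno a ha)
    have hle := hmin AF (BF.erase b) hAFA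
      ((Finset.coe_subset.mpr (Finset.erase_subset b BF)).trans hBFB) hcov'
    have hlt : (BF.erase b).card < BF.card := Finset.card_erase_lt_of_mem hbF
    omega
  set AS := (Set.toFinite A).toFinset with hASdef
  set BS := (Set.toFinite B).toFinset with hBSdef
  have hASmem : ∀ {v : V}, v ∈ AS ↔ v ∈ A := fun {v} => Set.Finite.mem_toFinset _
  have hBSmem : ∀ {v : V}, v ∈ BS ↔ v ∈ B := fun {v} => Set.Finite.mem_toFinset _
  -- Hall condition on the A-side of the cover
  have hallA : ∀ s : Finset {a // a ∈ AF},
      s.card ≤ (s.biUnion (fun a => (BS \ BF).filter (fun b => ¬G.Adj ↑a b))).card := by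
    intro s
    by_contra hlt
    push_neg at hlt
    set U := s.biUnion (fun a => (BS \ BF).filter (fun b => ¬G.Adj ↑a b)) with hU
    set S := s.image Subtype.val with hS
    have hScard : S.card = s.card := Finset.card_image_of_injective _ Subtype.val_injective
    have hSsub : S ⊆ AF := by
      intro a haS
      obtain ⟨a', _, rfl⟩ := Finset.mem_image.mp haS
      exact a'.2
    have hUB : ∀ {b}, b ∈ U → b ∈ BS \ BF := by
      intro b hb
      obtain ⟨a', _, hmem⟩ := Finset.mem_biUnion.mp hb
      exact (Finset.mem_filter.mp hmem).1
    have hcov' : ∀ a ∈ A, ∀ b ∈ B, ¬G.Adj a b → a ∈ AF \ S ∨ b ∈ BF ∪ U := by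
      intro a ha b hb hn
      rcases hcov a ha b hb hn with h | h
      · by_cases haS : a ∈ S
        · by_cases hbBF : b ∈ BF
          · exact Or.inr (Finset.mem_union_left _ hbBF)
          · refine Or.inr (Finset.mem_union_right _ ?_)
            obtain ⟨a', ha's, ha'v⟩ := Finset.mem_image.mp haS
            refine Finset.mem_biUnion.mpr ⟨a', ha's, Finset.mem_filter.mpr ⟨?_, ?_⟩⟩
            · exact Finset.mem_sdiff.mpr ⟨hBSmem.mpr hb, hbBF⟩
            · rw [ha'v]; exact hn
        · exact Or.inl (Finset.mem_sdiff.mpr ⟨h, haS⟩)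
      · exact Or.inr (Finset.mem_union_left _ h)
    have hle := hmin (AF \ S) (BF ∪ U)
      ((Finset.coe_subset.mpr (Finset.sdiff_subset)).trans hAFA)
      (by
        intro b hb
        rcases Finset.mem_union.mp (Finset.mem_coe.mp hb) with h | h
        · exact hBFB (Finset.mem_coe.mpr h)
        · exact hBSmem.mp (Finset.mem_sdiff.mp (hUB h)).1)
      hcov'
    have h1 : (AF \ S).card = AF.card - S.card := Finset.card_sdiff_of_subset hSsub
    have h2 : (BF ∪ U).card ≤ BF.card + U.card := Finset.card_union_le _ _
    have h3 : S.card ≤ AF.card := Finset.card_le_card hSsub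
    omega
  -- Hall condition on the B-side of the cover
  have hallB : ∀ s : Finset {b // b ∈ BF},
      s.card ≤ (s.biUnion (fun b => (AS \ AF).filter (fun a => ¬G.Adj a ↑b))).card := by
    intro s
    by_contra hlt
    push_neg at hlt
    set U := s.biUnion (fun b => (AS \ AF).filter (fun a => ¬G.Adj a ↑b)) with hU
    set S := s.image Subtype.val with hS
    have hScard : S.card = s.card := Finset.card_image_of_injective _ Subtype.val_injective
    have hSsub : S ⊆ BF := by
      intro b hbS
      obtain ⟨b', _, rfl⟩ := Finset.mem_image.mp hbS
      exact b'.2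
    have hUA : ∀ {a}, a ∈ U → a ∈ AS \ AF := by
      intro a ha
      obtain ⟨b', _, hmem⟩ := Finset.mem_biUnion.mp ha
      exact (Finset.mem_filter.mp hmem).1
    have hcov' : ∀ a ∈ A, ∀ b ∈ B, ¬G.Adj a b → a ∈ AF ∪ U ∨ b ∈ BF \ S := by
      intro a ha b hb hn
      rcases hcov a ha b hb hn with h | h
      · exact Or.inl (Finset.mem_union_left _ h)
      · by_cases hbS : b ∈ S
        · by_cases haAF : a ∈ AF
          · exact Or.inl (Finset.mem_union_left _ haAF)
          · refine Or.inl (Finset.mem_union_right _ ?_)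
            obtain ⟨b', hb's, hb'v⟩ := Finset.mem_image.mp hbS
            refine Finset.mem_biUnion.mpr ⟨b', hb's, Finset.mem_filter.mpr ⟨?_, ?_⟩⟩
            · exact Finset.mem_sdiff.mpr ⟨hASmem.mpr ha, haAF⟩
            · rw [hb'v]; exact hn
        · exact Or.inr (Finset.mem_sdiff.mpr ⟨h, hbS⟩)
    have hle := hmin (AF ∪ U) (BF \ S)
      (by
        intro a ha
        rcases Finset.mem_union.mp (Finset.mem_coe.mp ha) with h | h
        · exact hAFA (Finset.mem_coe.mpr h)
        · exact hASmem.mp (Finset.mem_sdiff.mp (hUA h)).1)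
      ((Finset.coe_subset.mpr (Finset.sdiff_subset)).trans hBFB)
      hcov'
    have h1 : (BF \ S).card = BF.card - S.card := Finset.card_sdiff_of_subset hSsub
    have h2 : (AF ∪ U).card ≤ AF.card + U.card := Finset.card_union_le _ _
    have h3 : S.card ≤ BF.card := Finset.card_le_card hSsub
    omega
  obtain ⟨f0, hf0inj, hf0mem⟩ :=
    (Finset.all_card_le_biUnion_card_iff_exists_injective _).mp hallA
  obtain ⟨g0, hg0inj, hg0mem⟩ :=
    (Finset.all_card_le_biUnion_card_iff_exists_injective _).mp hallB
  -- package the matchings for the coloring lemma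
  set A' : Set V := ↑AF with hA'def
  set B' : Set V := ↑BF with hB'def
  have hf0mem' : ∀ a : {a // a ∈ AF}, f0 a ∈ BS \ BF ∧ ¬G.Adj ↑a (f0 a) :=
    fun a => by
      have := hf0mem a
      exact ⟨(Finset.mem_filter.mp this).1, (Finset.mem_filter.mp this).2⟩
  have hg0mem' : ∀ b : {b // b ∈ BF}, g0 b ∈ AS \ AF ∧ ¬G.Adj (g0 b) ↑b :=
    fun b => by
      have := hg0mem b
      exact ⟨(Finset.mem_filter.mp this).1, (Finset.mem_filter.mp this).2⟩
  set f : A' → V := fun a => f0 ⟨a.1, Finset.mem_coe.mp a.2⟩ with hfdef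
  set g : B' → V := fun b => g0 ⟨b.1, Finset.mem_coe.mp b.2⟩ with hgdef
  have hfinj : Function.Injective f := by
    intro a a' h
    simp only [hfdef] at h
    have := hf0inj h
    exact Subtype.ext (congrArg Subtype.val this)
  have hginj : Function.Injective g := by
    intro b b' h
    simp only [hgdef] at h
    have := hg0inj h
    exact Subtype.ext (congrArg Subtype.val this)
  have hfB : ∀ a, f a ∈ B :=
    fun a => hBSmem.mp (Finset.mem_sdiff.mp (hf0mem' _).1).1
  have hfB' : ∀ a, f a ∉ B' :=
    fun a h => (Finset.mem_sdiff.mp (hf0mem' _).1).2 (Finset.mem_coe.mp h)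
  have hfadj : ∀ a : A', ¬G.Adj a.1 (f a) := fun a => (hf0mem' _).2
  have hgA : ∀ b, g b ∈ A :=
    fun b => hASmem.mp (Finset.mem_sdiff.mp (hg0mem' _).1).1
  have hgA' : ∀ b, g b ∉ A' :=
    fun b h => (Finset.mem_sdiff.mp (hg0mem' _).1).2 (Finset.mem_coe.mp h)
  have hgadj : ∀ b : B', ¬G.Adj (g b) b.1 := fun b => (hg0mem' _).2
  have hC1 : ∀ a ∈ A, ∀ b ∈ B, ¬G.Adj a b → a ∈ A' ∨ b ∈ B' := by
    intro a ha b hb hn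
    rcases hcov a ha b hb hn with h | h
    · exact Or.inl (Finset.mem_coe.mpr h)
    · exact Or.inr (Finset.mem_coe.mpr h)
  have hC2a' : ∀ a ∈ A', ∃ b ∈ B, ¬G.Adj a b := fun a ha => hC2a a (Finset.mem_coe.mp ha)
  have hC2b' : ∀ b ∈ B', ∃ a ∈ A, ¬G.Adj a b := fun b hb => hC2b b (Finset.mem_coe.mp hb)
  refine ⟨Stmt18Aux.mod G A B A' B', ?_, ?_, ?_⟩
  · exact Stmt18Aux.mod_clawFree hcf hd hA hB hout hC2a' hC2b'
  · -- strictly fewer edges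
    have hdel : ∃ a ∈ A, ∃ b ∈ B, G.Adj a b ∧ (a ∈ AF ∨ b ∈ BF) := by
      by_contra hno
      push_neg at hno
      apply hnr
      refine ⟨A \ A', A ∩ A', B \ B', B ∩ B', (Set.diff_union_inter A A').symm,
        Set.disjoint_left.mpr fun z hz hz2 => hz.2 hz2.2,
        (Set.diff_union_inter B B').symm,
        Set.disjoint_left.mpr fun z hz hz2 => hz.2 hz2.2, ?_, ?_, ?_⟩
      · intro a ha b hb
        by_contra hn
        rcases hcov a ha.1 b hb.1 hn with h | h
        · exact ha.2 (Finset.mem_coe.mpr h)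
        · exact hb.2 (Finset.mem_coe.mpr h)
      · intro a ha b hb hadj
        exact (hno a ha.1 b hb hadj).1 (Finset.mem_coe.mp ha.2)
      · intro a ha b hb hadj
        exact (hno a ha b hb.1 hadj).2 (Finset.mem_coe.mp hb.2)
    obtain ⟨a, ha, b, hb, hGab, hdel'⟩ := hdel
    have hsub : (Stmt18Aux.mod G A B A' B').edgeSet ⊆ G.edgeSet :=
      SimpleGraph.edgeSet_mono Stmt18Aux.mod_le
    have hmem : s(a, b) ∈ G.edgeSet := hGab
    have hnmem : s(a, b) ∉ (Stmt18Aux.mod G A B A' B').edgeSet := by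
      rw [SimpleGraph.mem_edgeSet]
      intro hadj
      refine hadj.2.1 ⟨ha, hb, ?_⟩
      rcases hdel' with h | h
      · exact Or.inl (Finset.mem_coe.mpr h)
      · exact Or.inr (Finset.mem_coe.mpr h)
    exact Set.ncard_lt_ncard ((Set.ssubset_iff_of_subset hsub).mpr ⟨_, hmem, hnmem⟩)
      (Set.toFinite _)
  · -- equal chromatic number
    have hset : Set.ofPred (Stmt18Aux.mod G A B A' B').Colorable = Set.ofPred G.Colorable := by
      ext n
      constructor
      · intro h
        exact Stmt18Aux.mod_colorable hd hA hB hout hC1 f hfinj hfB hfB' hfadj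
          g hginj hgA hgA' hgadj h
      · intro h
        exact SimpleGraph.Colorable.mono_left Stmt18Aux.mod_le h
    rw [SimpleGraph.chromaticNumber_eq_biInf, SimpleGraph.chromaticNumber_eq_biInf, hset]
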